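/- Let v be a node of the suffix tree of a string S with children whose occurrence sets are pairwise disjoint, let ℓ ∈ [sd(u), sd(v)−1) for the parent edge (u,v), and let P be the prefix of str(v) of length ℓ+1. If P is periodic and some run containing occurrences of P contains at least two occurrences of P, then per(P) = per(str(v)) and the set of runs containing occurrences of P equals the set of runs containing occurrences of str(v). -/

import Mathlib

open Classical

/-- `p` is a period of the string (list) `P`. -/
def IsPeriodOf {α : Type*} (P : List α) (p : ℕ) : Prop :=
  0 < p ∧ ∀ i, i + p < P.length → P[i]? = P[i + p]?

/-- The smallest period of `P`. -/
noncomputable def minPeriod {α : Type*} (P : List α) : ℕ := sInf {p | IsPeriodOf P p}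

/-- `P` is periodic if its smallest period is at most `|P|/2`. -/
def ListPeriodic {α : Type*} (P : List α) : Prop := 2 * minPeriod P ≤ P.length

/-- `P` occurs in `S` starting at position `i`. -/
def OccursAt {α : Type*} (P S : List α) (i : ℕ) : Prop :=
  i + P.length ≤ S.length ∧ (S.drop i).take P.length = P

/-- The set of starting positions of occurrences of `P` in `S`. -/
noncomputable def occ {α : Type*} (P S : List α) : Finset ℕ :=
  (Finset.range (S.length + 1)).filter (fun i => OccursAt P S i)

/-- Hamming distance between two (equal-length) strings. -/
noncomputable def hamming {α : Type*} (S T : List α) : ℕ :=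
  ((List.range S.length).filter (fun i => S[i]? ≠ T[i]?)).length

/-- `P` is `(τ,k)`-resilient in `S`. -/
def Resilient {α : Type*} (P S : List α) (τ k : ℕ) : Prop :=
  ∀ S' : List α, S'.length = S.length → hamming S S' ≤ k → τ ≤ (occ P S').card

/-- The fragment `S[x..y]` (inclusive). -/
def frag {α : Type*} (S : List α) (x y : ℕ) : List α := (S.drop x).take (y - x + 1)

/-- The fragment `S[x..y]` is a run of `S`. -/
def IsRun {α : Type*} (S : List α) (x y : ℕ) : Prop :=
  x ≤ y ∧ y < S.length ∧ 2 * minPeriod (frag S x y) ≤ y - x + 1 ∧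
  (0 < x → ¬ IsPeriodOf (frag S (x - 1) y) (minPeriod (frag S x y))) ∧
  (y + 1 < S.length → ¬ IsPeriodOf (frag S x (y + 1)) (minPeriod (frag S x y)))


section Aux
variable {α : Type*}

private lemma get?_take' (l : List α) {m n : ℕ} (h : n < m) : (l.take m)[n]? = l[n]? := by
  simp [List.getElem?_take, h]

private lemma get?_drop' (l : List α) (m n : ℕ) : (l.drop m)[n]? = l[m + n]? := by
  simp [List.getElem?_drop]

private lemma prefix_get? {P W : List α} (h : P <+: W) {i : ℕ} (hi : i < P.length) :
    P[i]? = W[i]? := by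
  obtain ⟨t, rfl⟩ := h
  simp [List.getElem?_append, hi]

private lemma isPeriodOf_length_add_one (P : List α) : IsPeriodOf P (P.length + 1) :=
  ⟨Nat.succ_pos _, fun i hi => absurd hi (by omega)⟩

private lemma minPeriod_isPeriod (P : List α) : IsPeriodOf P (minPeriod P) := by
  have h : {p | IsPeriodOf P p}.Nonempty := ⟨P.length + 1, isPeriodOf_length_add_one P⟩
  exact Nat.sInf_mem h

private lemma minPeriod_pos (P : List α) : 0 < minPeriod P := (minPeriod_isPeriod P).1

private lemma minPeriod_le {P : List α} {p : ℕ} (h : IsPeriodOf P p) : minPeriod P ≤ p :=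
  Nat.sInf_le (show p ∈ {q | IsPeriodOf P q} from h)

private lemma isPeriodOf_prefix {P W : List α} (h : P <+: W) {p : ℕ} (hp : IsPeriodOf W p) :
    IsPeriodOf P p := by
  refine ⟨hp.1, fun i hi => ?_⟩
  have hle := h.length_le
  rw [prefix_get? h (by omega), prefix_get? h (by omega)]
  exact hp.2 i (by omega)

private lemma occursAt_get? {P S : List α} {i j : ℕ} (h : OccursAt P S i) (hj : j < P.length) :
    P[j]? = S[i + j]? := by
  conv_lhs => rw [← h.2]
  rw [get?_take' _ hj, get?_drop']

private lemma isPeriodOf_of_two_occ {W S : List α} {i p : ℕ} (hp : 0 < p)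
    (h1 : OccursAt W S i) (h2 : OccursAt W S (i + p)) : IsPeriodOf W p := by
  refine ⟨hp, fun j hj => ?_⟩
  rw [occursAt_get? h1 hj, occursAt_get? h2 (by omega)]
  congr 1
  omega

private lemma occ_iff {P W S : List α} (hocc : occ P S = occ W S) (i : ℕ) :
    OccursAt P S i ↔ OccursAt W S i := by
  constructor <;> intro h
  · have h1 : i ∈ occ P S := Finset.mem_filter.2 ⟨Finset.mem_range.2 (by have := h.1; omega), h⟩
    rw [hocc] at h1
    exact (Finset.mem_filter.1 h1).2
  · have h1 : i ∈ occ W S := Finset.mem_filter.2 ⟨Finset.mem_range.2 (by have := h.1; omega), h⟩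
    rw [← hocc] at h1
    exact (Finset.mem_filter.1 h1).2

/-- `p` is a period of `S` on the (inclusive) interval `[x, y]`. -/
private def PerOn (S : List α) (x y p : ℕ) : Prop :=
  ∀ a, x ≤ a → a + p ≤ y → S[a]? = S[a + p]?

private lemma frag_length {S : List α} {x y : ℕ} (hxy : x ≤ y) (hy : y < S.length) :
    (frag S x y).length = y - x + 1 := by
  simp only [frag, List.length_take, List.length_drop]
  omega

private lemma frag_get? {S : List α} {x y j : ℕ} (hj : j < y - x + 1) :
    (frag S x y)[j]? = S[x + j]? := by
  rw [frag, get?_take' _ hj, get?_drop']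

private lemma isPeriodOf_frag_iff {S : List α} {x y p : ℕ} (hp : 0 < p) (hxy : x ≤ y)
    (hy : y < S.length) : IsPeriodOf (frag S x y) p ↔ PerOn S x y p := by
  constructor
  · rintro ⟨-, h⟩ a ha hap
    have h2 := h (a - x) (by rw [frag_length hxy hy]; omega)
    rw [frag_get? (by omega), frag_get? (by omega)] at h2
    have e1 : x + (a - x) = a := by omega
    have e2 : x + (a - x + p) = a + p := by omega
    rwa [e1, e2] at h2
  · intro h
    refine ⟨hp, fun j hj => ?_⟩
    rw [frag_length hxy hy] at hj
    rw [frag_get? (by omega), frag_get? (by omega)]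
    have h2 := h (x + j) (by omega) (by omega)
    have e : x + (j + p) = x + j + p := by omega
    rwa [e]

private lemma perOn_union {S : List α} {x y i j p : ℕ} (h1 : PerOn S x y p) (h2 : PerOn S i j p)
    (hov : i + p ≤ y + 1) : PerOn S x j p := by
  intro a ha hap
  by_cases hc : a + p ≤ y
  · exact h1 a ha hc
  · exact h2 a (by omega) hap

private lemma perOn_of_occ {W S : List α} {i p : ℕ} (hW : IsPeriodOf W p) (h : OccursAt W S i)
    (hl : 0 < W.length) : PerOn S i (i + W.length - 1) p := by
  intro a ha hap
  have hj : (a - i) + p < W.length := by omega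
  have h2 := hW.2 (a - i) hj
  rw [occursAt_get? h (by omega), occursAt_get? h hj] at h2
  have e1 : i + (a - i) = a := by omega
  have e2 : i + (a - i + p) = a + p := by omega
  rwa [e1, e2] at h2

end Aux

theorem stmt16 {α : Type*} (S P W : List α) (hprefix : P <+: W)
    (hlt : P.length < W.length)
    (hocc : occ P S = occ W S) (hper : ListPeriodic P)
    (htwo : ∃ i, OccursAt P S i ∧ OccursAt P S (i + minPeriod P)) :
    minPeriod P = minPeriod W ∧
    {r : ℕ × ℕ | IsRun S r.1 r.2 ∧ minPeriod (frag S r.1 r.2) = minPeriod P ∧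
        ∃ i, OccursAt P S i ∧ r.1 ≤ i ∧ i + P.length ≤ r.2 + 1} =
    {r : ℕ × ℕ | IsRun S r.1 r.2 ∧ minPeriod (frag S r.1 r.2) = minPeriod W ∧
        ∃ i, OccursAt W S i ∧ r.1 ≤ i ∧ i + W.length ≤ r.2 + 1} := by
  
  have hp0 : 0 < minPeriod P := minPeriod_pos P
  have hper' : 2 * minPeriod P ≤ P.length := hper
  have hWl : 0 < W.length := by omega
  have occiff := occ_iff hocc
  obtain ⟨i0, h1, h2⟩ := htwo
  have hWper : IsPeriodOf W (minPeriod P) :=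
    isPeriodOf_of_two_occ hp0 ((occiff i0).1 h1) ((occiff _).1 h2)
  have heq : minPeriod P = minPeriod W :=
    le_antisymm (minPeriod_le (isPeriodOf_prefix hprefix (minPeriod_isPeriod W)))
      (minPeriod_le hWper)
  refine ⟨heq, ?_⟩
  ext ⟨x, y⟩
  simp only [Set.mem_setOf_eq]
  constructor
  · rintro ⟨hrun, hmp, i, hPi, hxi, hiy⟩
    refine ⟨hrun, hmp.trans heq, i, (occiff i).1 hPi, hxi, ?_⟩
    by_contra hcon
    push_neg at hcon
    obtain ⟨hxy, hyS, -, -, hmax⟩ := hrun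
    have hWi : OccursAt W S i := (occiff i).1 hPi
    have hiW : i + W.length ≤ S.length := hWi.1
    have hy1 : y + 1 < S.length := by omega
    apply hmax hy1
    rw [hmp, isPeriodOf_frag_iff hp0 (by omega) hy1]
    have hrunper : PerOn S x y (minPeriod P) := by
      rw [← isPeriodOf_frag_iff hp0 hxy hyS, ← hmp]
      exact minPeriod_isPeriod _
    have hWocc : PerOn S i (i + W.length - 1) (minPeriod P) := perOn_of_occ hWper hWi hWl
    have hun : PerOn S x (i + W.length - 1) (minPeriod P) :=
      perOn_union hrunper hWocc (by omega)
    exact fun a ha hap => hun a ha (by omega)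
  · rintro ⟨hrun, hmp, i, hWi, hxi, hiy⟩
    have := hprefix.length_le
    exact ⟨hrun, hmp.trans heq.symm, i, (occiff i).2 hWi, hxi, by omega⟩
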